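/- Decomposition of the C_L quantum information of a mixture (identity): In the multi-parameter spectral-family setup, define the p×p real matrices (F(p)(θ))_{kl} = Σ_{i: p_i>0} p_i^{(k)} p_i^{(l)}/p_i (the classical Fisher information of the eigenvalue distribution) and, for each i, (H(ρ_i)(θ))_{kl} = 4( Re⟨w_i^{(k)}(θ), w_i^{(l)}(θ)⟩ − ⟨w_i^{(k)}(θ), w_i(θ)⟩⟨w_i(θ), w_i^{(l)}(θ)⟩ ) (the SLD quantum information of the pure family ρ_i(θ) = |w_i(θ)⟩⟨w_i(θ)|). Then C_L(θ) = F(p)(θ) + Σ_{i=1}^d p_i(θ) · H(ρ_i)(θ). -/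

import Mathlib

open scoped BigOperators
open Matrix

noncomputable section

/-- The Hermitian inner product on `Fin d → ℂ`, conjugate-linear in the first argument. -/
def inn {d : ℕ} (x y : Fin d → ℂ) : ℂ := ∑ i, (starRingEnd ℂ) (x i) * y i

lemma inn_conj {d : ℕ} (x y : Fin d → ℂ) : inn y x = (starRingEnd ℂ) (inn x y) := by
  simp [inn, map_sum, mul_comm]

lemma col_orth {d : ℕ} (w : Fin d → Fin d → ℂ)
    (h : ∀ i j, inn (w i) (w j) = if i = j then 1 else 0) (a b : Fin d) :
    ∑ j, w j a * (starRingEnd ℂ) (w j b) = if a = b then 1 else 0 := by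
  have hM : (Matrix.of w) * (Matrix.of w)ᴴ = 1 := by
    ext i j
    have := congrArg (starRingEnd ℂ) (h i j)
    simp only [inn, map_sum, _root_.map_mul, MonoidWithZeroHom.map_ite_one_zero,
      starRingEnd_self_apply] at this
    simpa [Matrix.mul_apply, Matrix.conjTranspose_apply, Matrix.one_apply, mul_comm] using this
  have hM' : (Matrix.of w)ᴴ * (Matrix.of w) = 1 := mul_eq_one_comm.mp hM
  have := congrArg (starRingEnd ℂ) (congrFun (congrFun hM' a) b)
  simpa [Matrix.mul_apply, Matrix.conjTranspose_apply, Matrix.one_apply, map_sum, mul_comm,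
    eq_comm] using this

lemma parseval {d : ℕ} (w : Fin d → Fin d → ℂ)
    (h : ∀ i j, inn (w i) (w j) = if i = j then 1 else 0) (x y : Fin d → ℂ) :
    inn x y = ∑ j, inn x (w j) * inn (w j) y := by
  have key : ∀ j : Fin d, inn x (w j) * inn (w j) y
      = ∑ a, ∑ b, ((starRingEnd ℂ) (x a) * y b) * (w j a * (starRingEnd ℂ) (w j b)) := by
    intro j
    simp only [inn, Finset.sum_mul_sum]
    exact Finset.sum_congr rfl fun a _ => Finset.sum_congr rfl fun b _ => by ring
  rw [Finset.sum_congr rfl (fun j _ => key j), Finset.sum_comm]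
  rw [Finset.sum_congr rfl (fun (a : Fin d) (_ : a ∈ Finset.univ) =>
    (Finset.sum_comm : ∑ j : Fin d, ∑ b : Fin d,
      ((starRingEnd ℂ) (x a) * y b) * (w j a * (starRingEnd ℂ) (w j b)) = _))]
  simp only [← Finset.mul_sum, col_orth w h]
  simp [inn, mul_ite]

lemma double_sum_trick {d : ℕ} (B : Fin d → Fin d → ℝ) (q : Fin d → ℝ) (hq : ∀ i, 0 ≤ q i)
    (hBsym : ∀ i j, B j i = B i j) :
    ∑ i, ∑ j, (if i < j ∧ 0 < q i + q j then (q i + q j) * B i j else 0)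
      = ∑ i, q i * ((∑ j, B i j) - B i i) := by
  have step1 : ∑ i, ∑ j, (if i < j ∧ 0 < q i + q j then (q i + q j) * B i j else 0)
      = ∑ i, ∑ j, ((if i < j then q i * B i j else 0) + (if j < i then q i * B i j else 0)) := by
    have mid : ∑ i, ∑ j, (if i < j ∧ 0 < q i + q j then (q i + q j) * B i j else 0)
        = ∑ i, ∑ j, ((if i < j then q i * B i j else 0) + (if i < j then q j * B i j else 0)) := by
      refine Finset.sum_congr rfl fun i _ => Finset.sum_congr rfl fun j _ => ?_
      by_cases h : i < j
      · by_cases hp : 0 < q i + q j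
        · simp [h, hp, add_mul]
        · have h0 : q i + q j = 0 := le_antisymm (not_lt.1 hp) (add_nonneg (hq i) (hq j))
          have hqi : q i = 0 := by nlinarith [hq i, hq j]
          have hqj : q j = 0 := by nlinarith [hq i, hq j]
          simp [h, hp, hqi, hqj]
      · simp [h]
    rw [mid]
    simp only [Finset.sum_add_distrib]
    congr 1
    rw [Finset.sum_comm]
    refine Finset.sum_congr rfl fun i _ => Finset.sum_congr rfl fun j _ => ?_
    by_cases h : j < i
    · simp [h, hBsym i j]
    · simp [h]
  rw [step1]
  refine Finset.sum_congr rfl fun i _ => ?_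
  have expand : ∑ j, ((if i < j then q i * B i j else 0) + (if j < i then q i * B i j else 0))
      = ∑ j, (if i ≠ j then q i * B i j else 0) := by
    refine Finset.sum_congr rfl fun j _ => ?_
    rcases lt_trichotomy i j with h | h | h
    · simp [h, h.ne, asymm h]
    · simp [h]
    · simp [h, (asymm h : ¬ i < j), h.ne']
  rw [expand]
  have hdiff : ∑ j, (if i ≠ j then q i * B i j else 0)
      = (∑ j, q i * B i j) - q i * B i i := by
    have h1 : ∑ j, (if i = j then q i * B i j else 0) = q i * B i i := by
      simp [Finset.sum_ite_eq]
    have h2 : ∀ j : Fin d, (if i ≠ j then q i * B i j else 0)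
        = q i * B i j - (if i = j then q i * B i j else 0) := by
      intro j; by_cases h : i = j <;> simp [h]
    rw [Finset.sum_congr rfl fun j _ => h2 j, Finset.sum_sub_distrib, h1]
  rw [hdiff, ← Finset.mul_sum, mul_sub]

/-- **Decomposition of the `C_L` quantum information of a mixture.**
`C_L(θ) = F(p)(θ) + Σ_i p_i(θ) · H(ρ_i)(θ)`: the `C_L` information equals the classical
Fisher information of the eigenvalue distribution plus the weighted sum of the SLD
informations of the pure eigenvector families. -/
theorem CL_mixture_decomposition {d n : ℕ} (hd : 1 ≤ d) (hn : 1 ≤ n)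
    (p : Fin d → (Fin n → ℝ) → ℝ) (w : Fin d → (Fin n → ℝ) → (Fin d → ℂ))
    (pd : Fin d → Fin n → (Fin n → ℝ) → ℝ)
    (wd : Fin d → Fin n → (Fin n → ℝ) → (Fin d → ℂ))
    (horth : ∀ θ (i j : Fin d), inn (w i θ) (w j θ) = if i = j then 1 else 0)
    (hpnn : ∀ (i : Fin d) θ, 0 ≤ p i θ) (hpsum : ∀ θ, ∑ i, p i θ = 1)
    (hpd : ∀ (i : Fin d) (k : Fin n) θ,
      HasDerivAt (fun t => p i (Function.update θ k t)) (pd i k θ) (θ k))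
    (hwd : ∀ (i : Fin d) (k : Fin n) θ,
      HasDerivAt (fun t => w i (Function.update θ k t)) (wd i k θ) (θ k))
    (hpdC : ∀ i : Fin d, Continuous fun θ k => pd i k θ)
    (hwdC : ∀ i : Fin d, Continuous fun θ k => wd i k θ)
    (hdich : ∀ i : Fin d, (∀ θ, 0 < p i θ) ∨ (∀ θ, p i θ = 0))
    (CL Fp : (Fin n → ℝ) → Matrix (Fin n) (Fin n) ℝ)
    (Hpure : Fin d → (Fin n → ℝ) → Matrix (Fin n) (Fin n) ℝ)
    (hCL : ∀ θ (k l : Fin n), CL θ k l =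
        (∑ i, if 0 < p i θ then pd i k θ * pd i l θ / p i θ else 0)
        + 4 * (∑ i, ∑ j, if i < j ∧ 0 < p i θ + p j θ then
            ((p i θ + p j θ : ℝ) : ℂ) * inn (wd i k θ) (w j θ) * inn (w j θ) (wd i l θ)
            else 0).re)
    (hFp : ∀ θ (k l : Fin n), Fp θ k l =
        ∑ i, if 0 < p i θ then pd i k θ * pd i l θ / p i θ else 0)
    (hHpure : ∀ (i : Fin d) θ (k l : Fin n), Hpure i θ k l =
        4 * ((inn (wd i k θ) (wd i l θ)).re -
          (inn (wd i k θ) (w i θ) * inn (w i θ) (wd i l θ)).re)) :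
    ∀ θ : Fin n → ℝ, CL θ = Fp θ + ∑ i, p i θ • Hpure i θ := by
  -- derivative of orthonormality relations
  have hderiv : ∀ θ (k : Fin n) (i j : Fin d),
      inn (wd i k θ) (w j θ) + inn (w i θ) (wd j k θ) = 0 := by
    intro θ k i j
    have hcomp : ∀ (m : Fin d) (a : Fin d),
        HasDerivAt (fun t => w m (Function.update θ k t) a) (wd m k θ a) (θ k) := by
      intro m a
      exact (ContinuousLinearMap.proj (R := ℝ) (φ := fun _ : Fin d => ℂ)
        a).hasFDerivAt.comp_hasDerivAt _ (hwd m k θ)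
    have hconj : ∀ a, HasDerivAt (fun t => (starRingEnd ℂ) (w i (Function.update θ k t) a))
        ((starRingEnd ℂ) (wd i k θ a)) (θ k) := by
      intro a
      have := Complex.conjCLE.toContinuousLinearMap.hasFDerivAt.comp_hasDerivAt _ (hcomp i a)
      exact this
    have hsum : HasDerivAt
        (fun t => inn (w i (Function.update θ k t)) (w j (Function.update θ k t)))
        (∑ a, ((starRingEnd ℂ) (wd i k θ a) * w j θ a + (starRingEnd ℂ) (w i θ a) * wd j k θ a))
        (θ k) := by
      have h := HasDerivAt.fun_sum (fun a (_ : a ∈ Finset.univ) => ((hconj a).mul (hcomp j a)))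
      simpa [inn, Function.update_eq_self] using h
    have hconst : HasDerivAt
        (fun t => inn (w i (Function.update θ k t)) (w j (Function.update θ k t)))
        0 (θ k) := by
      have he : (fun t => inn (w i (Function.update θ k t)) (w j (Function.update θ k t)))
          = fun _ => (if i = j then (1 : ℂ) else 0) := funext fun t => horth _ i j
      rw [he]; exact hasDerivAt_const _ _
    have h0 := hsum.unique hconst
    calc inn (wd i k θ) (w j θ) + inn (w i θ) (wd j k θ)
        = ∑ a, ((starRingEnd ℂ) (wd i k θ a) * w j θ a
            + (starRingEnd ℂ) (w i θ a) * wd j k θ a) := by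
          rw [inn, inn, ← Finset.sum_add_distrib]
      _ = 0 := h0
  intro θ
  ext k l
  simp only [Matrix.add_apply, Matrix.sum_apply, Matrix.smul_apply, smul_eq_mul]
  rw [hCL θ k l, hFp θ k l]
  congr 1
  -- symmetry of the real parts
  have hArel : ∀ i j : Fin d, inn (wd j k θ) (w i θ) * inn (w i θ) (wd j l θ)
      = (starRingEnd ℂ) (inn (wd i k θ) (w j θ) * inn (w j θ) (wd i l θ)) := by
    intro i j
    have c1 : (starRingEnd ℂ) (inn (wd i k θ) (w j θ)) = - inn (wd j k θ) (w i θ) := by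
      rw [← inn_conj]
      exact eq_neg_of_add_eq_zero_right (hderiv θ k j i)
    have c2 : (starRingEnd ℂ) (inn (w j θ) (wd i l θ)) = - inn (w i θ) (wd j l θ) := by
      rw [inn_conj (wd i l θ) (w j θ), Complex.conj_conj]
      exact eq_neg_of_add_eq_zero_left (hderiv θ l i j)
    rw [_root_.map_mul, c1, c2]; ring
  have hBsym : ∀ i j : Fin d,
      (inn (wd j k θ) (w i θ) * inn (w i θ) (wd j l θ)).re
        = (inn (wd i k θ) (w j θ) * inn (w j θ) (wd i l θ)).re := by
    intro i j; rw [hArel i j, Complex.conj_re]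
  -- push `re` inside the double sum
  have hre : (∑ i, ∑ j, if i < j ∧ 0 < p i θ + p j θ then
        ((p i θ + p j θ : ℝ) : ℂ) * inn (wd i k θ) (w j θ) * inn (w j θ) (wd i l θ)
        else 0).re
      = ∑ i, ∑ j, (if i < j ∧ 0 < p i θ + p j θ then
          (p i θ + p j θ) * (inn (wd i k θ) (w j θ) * inn (w j θ) (wd i l θ)).re else 0) := by
    rw [Complex.re_sum]
    refine Finset.sum_congr rfl fun i _ => ?_
    rw [Complex.re_sum]
    refine Finset.sum_congr rfl fun j _ => ?_
    by_cases h : i < j ∧ 0 < p i θ + p j θ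
    · simp [h, mul_assoc, Complex.re_ofReal_mul]
    · simp [h]
  rw [hre, double_sum_trick _ (fun i => p i θ) (fun i => hpnn i θ) hBsym]
  -- identify with the weighted pure informations via Parseval
  rw [Finset.mul_sum]
  refine Finset.sum_congr rfl fun i _ => ?_
  rw [hHpure i θ k l]
  have hpars : inn (wd i k θ) (wd i l θ)
      = ∑ j, inn (wd i k θ) (w j θ) * inn (w j θ) (wd i l θ) :=
    parseval (fun j => w j θ) (fun a b => horth θ a b) _ _
  rw [hpars, Complex.re_sum]
  ring
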